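/- Let n ≥ 3 and let C be a reducible relative interaction matrix whose digraph G(C) has exactly the globally reachable nodes {1, …, r} with 3 ≤ r ≤ n, and suppose the subgraph induced by these nodes has star topology with center node 1 (C_{j1} = 1 for 2 ≤ j ≤ r and C_{1j} > 0 for 2 ≤ j ≤ r). Then the only fixed points of F in Δⁿ are the vertices {e_1, …, e_n}, and for every initial condition x(0) ∈ Δⁿ \ {e_1, …, e_n}, the iterates x(t+1) = F(x(t)) converge asymptotically to e_1. -/

import Mathlib

/-- The simplex Δⁿ = {x ∈ ℝⁿ : xᵢ ≥ 0, ∑ᵢ xᵢ = 1}. -/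
def simplex (n : ℕ) : Set (Fin n → ℝ) :=
  {x | (∀ i, 0 ≤ x i) ∧ ∑ i, x i = 1}

/-- The i-th vertex (standard basis vector) of the simplex. -/
def vertex (n : ℕ) (i : Fin n) : Fin n → ℝ := fun j => if j = i then 1 else 0

/-- A relative interaction matrix: nonnegative, row-stochastic, zero diagonal. -/
def IsRIM {n : ℕ} (C : Matrix (Fin n) (Fin n) ℝ) : Prop :=
  (∀ i j, 0 ≤ C i j) ∧ (∀ i, ∑ j, C i j = 1) ∧ (∀ i, C i i = 0)

/-- The single-timescale DeGroot–Friedkin map F(x) = Cᵀ(x − x²) + x². -/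
noncomputable def DF {n : ℕ} (C : Matrix (Fin n) (Fin n) ℝ) (x : Fin n → ℝ) : Fin n → ℝ :=
  fun i => ∑ j, C j i * (x j - (x j) ^ 2) + (x i) ^ 2

/-- A nonnegative matrix is irreducible if for all i ≠ j some power has positive (i,j) entry. -/
def Irred {n : ℕ} (C : Matrix (Fin n) (Fin n) ℝ) : Prop :=
  ∀ i j : Fin n, i ≠ j → ∃ k, 1 ≤ k ∧ 0 < (C ^ k) i j

/-- Node i is globally reachable in G(C): every other node reaches i. -/
def GloballyReachable {n : ℕ} (C : Matrix (Fin n) (Fin n) ℝ) (i : Fin n) : Prop :=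
  ∀ j, j ≠ i → ∃ k, 1 ≤ k ∧ 0 < (C ^ k) j i

/-! ### auxiliary definitions -/

/-- y_j = x_j (1 - x_j). -/
noncomputable def yv {n : ℕ} (x : Fin n → ℝ) (j : Fin n) : ℝ := x j - x j ^ 2

/-- the set of "sink"/transient nodes -/
def Sset (n r : ℕ) : Finset (Fin n) := Finset.univ.filter fun j : Fin n => r ≤ (j : ℕ)

/-- mass on transient nodes -/
noncomputable def mS {n : ℕ} (r : ℕ) (x : Fin n → ℝ) : ℝ := ∑ j ∈ Sset n r, x j

section Basic

variable {n : ℕ}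

lemma simplex_le_one {x : Fin n → ℝ} (hx : x ∈ simplex n) (i : Fin n) : x i ≤ 1 := by
  obtain ⟨h0, h1⟩ := hx
  calc x i ≤ ∑ j, x j := Finset.single_le_sum (fun j _ => h0 j) (Finset.mem_univ i)
  _ = 1 := h1

lemma yv_nonneg {x : Fin n → ℝ} (hx : x ∈ simplex n) (j : Fin n) : 0 ≤ yv x j := by
  have h1 := simplex_le_one hx j
  have h0 := hx.1 j
  have : yv x j = x j * (1 - x j) := by simp [yv]; ring
  rw [this]; exact mul_nonneg h0 (by linarith)

lemma yv_pos {x : Fin n → ℝ} (h0 : 0 < x j) (h1 : x j < 1) : 0 < yv x j := by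
  have : yv x j = x j * (1 - x j) := by simp [yv]; ring
  rw [this]; exact mul_pos h0 (by linarith)

lemma yv_pos_iff {x : Fin n → ℝ} (hx : x ∈ simplex n) (j : Fin n) :
    0 < yv x j ↔ (0 < x j ∧ x j < 1) := by
  constructor
  · intro h
    by_contra hc
    push_neg at hc
    rcases lt_or_ge 0 (x j) with h0 | h0
    · have := hc h0
      have h1 : x j = 1 := le_antisymm (simplex_le_one hx j) this
      simp [yv, h1] at h
    · have h1 : x j = 0 := le_antisymm h0 (hx.1 j)
      simp [yv, h1] at h
  · rintro ⟨h0, h1⟩; exact yv_pos h0 h1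

lemma vertex_mem_simplex (i : Fin n) : vertex n i ∈ simplex n := by
  constructor
  · intro j; unfold vertex; split <;> norm_num
  · simp [vertex]

/-- if some coordinate is 1 then x is a vertex -/
lemma eq_vertex_of_coord_one {x : Fin n → ℝ} (hx : x ∈ simplex n) {i : Fin n}
    (hi : x i = 1) : x = vertex n i := by
  obtain ⟨h0, h1⟩ := hx
  have hsum : ∑ j ∈ Finset.univ.erase i, x j = 0 := by
    have := Finset.add_sum_erase Finset.univ x (Finset.mem_univ i)
    rw [h1] at this
    linarith
  have hz : ∀ j ∈ Finset.univ.erase i, x j = 0 := by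
    intro j hj
    exact le_antisymm (by
      have := Finset.single_le_sum (f := x) (fun k _ => h0 k) hj
      linarith) (h0 j)
  funext j
  by_cases hji : j = i
  · subst hji; simp [vertex, hi]
  · simp [vertex, hji, hz j (Finset.mem_erase.2 ⟨hji, Finset.mem_univ j⟩)]

/-- a non-vertex point of the simplex has a coordinate strictly inside (0,1) -/
lemma exists_interior_coord {x : Fin n → ℝ} (hx : x ∈ simplex n)
    (hv : ∀ i, x ≠ vertex n i) : ∃ j, 0 < x j ∧ x j < 1 := by
  by_contra hc
  push_neg at hc
  -- every positive coordinate equals 1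
  have h1 : ∃ i, 0 < x i := by
    by_contra hh
    push_neg at hh
    have : ∑ i, x i = 0 := Finset.sum_eq_zero fun i _ => le_antisymm (hh i) (hx.1 i)
    rw [hx.2] at this; norm_num at this
  obtain ⟨i, hi⟩ := h1
  have : x i = 1 := le_antisymm (simplex_le_one hx i) (hc i hi)
  exact hv i (eq_vertex_of_coord_one hx this)

end Basic

section DFbasic

variable {n : ℕ} (C : Matrix (Fin n) (Fin n) ℝ)

lemma DF_apply (x : Fin n → ℝ) (i : Fin n) :
    DF C x i = ∑ j, C j i * yv x j + x i ^ 2 := rfl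

/-- sum of DF over any finset -/
lemma DF_sum (x : Fin n → ℝ) (A : Finset (Fin n)) :
    ∑ i ∈ A, DF C x i = ∑ j, (∑ i ∈ A, C j i) * yv x j + ∑ i ∈ A, x i ^ 2 := by
  unfold DF yv
  rw [Finset.sum_add_distrib, Finset.sum_comm]
  congr 1
  · exact Finset.sum_congr rfl fun j _ => (Finset.sum_mul ..).symm

/-- DF coordinates dominate each single term -/
lemma DF_ge_term (hC : IsRIM C) {x : Fin n → ℝ} (hx : x ∈ simplex n) (i j : Fin n) :
    C j i * yv x j ≤ DF C x i := by
  rw [DF_apply]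
  have h1 : C j i * yv x j ≤ ∑ k, C k i * yv x k :=
    Finset.single_le_sum (fun k _ => mul_nonneg (hC.1 k i) (yv_nonneg hx k)) (Finset.mem_univ j)
  nlinarith [sq_nonneg (x i)]

lemma DF_ge_sq (hC : IsRIM C) {x : Fin n → ℝ} (hx : x ∈ simplex n) (i : Fin n) :
    x i ^ 2 ≤ DF C x i := by
  rw [DF_apply]
  have : 0 ≤ ∑ k, C k i * yv x k :=
    Finset.sum_nonneg fun k _ => mul_nonneg (hC.1 k i) (yv_nonneg hx k)
  linarith

lemma DF_mem_simplex (hC : IsRIM C) {x : Fin n → ℝ} (hx : x ∈ simplex n) :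
    DF C x ∈ simplex n := by
  constructor
  · intro i
    calc (0:ℝ) ≤ x i ^ 2 := sq_nonneg _
    _ ≤ DF C x i := DF_ge_sq C hC hx i
  · -- column sums of Cᵀ are 1
    have h := DF_sum C x Finset.univ
    rw [h]
    have h2 : ∀ j : Fin n, (∑ i, C j i) * yv x j = yv x j := by
      intro j; rw [hC.2.1 j, one_mul]
    rw [Finset.sum_congr rfl fun j _ => h2 j]
    have : ∑ j, yv x j + ∑ i, x i ^ 2 = ∑ j, x j := by
      unfold yv; rw [← Finset.sum_add_distrib]; congr 1; funext j; ring
    rw [this, hx.2]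

lemma DF_vertex (i : Fin n) : DF C (vertex n i) = vertex n i := by
  funext k
  rw [DF_apply]
  have hy : ∀ j, yv (vertex n i) j = 0 := by
    intro j; unfold yv vertex; split <;> norm_num
  rw [Finset.sum_congr rfl fun j _ => by rw [hy j, mul_zero]]
  simp only [Finset.sum_const_zero, zero_add]
  unfold vertex; split <;> norm_num

/-- preimage of a vertex in the simplex is that vertex -/
lemma eq_vertex_of_DF_eq_vertex (hC : IsRIM C) {x : Fin n → ℝ} (hx : x ∈ simplex n)
    {i : Fin n} (h : DF C x = vertex n i) : x = vertex n i := by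
  have hz : ∀ j, j ≠ i → x j = 0 := by
    intro j hj
    have h0 : DF C x j = 0 := by rw [h]; simp [vertex, hj]
    have := DF_ge_sq C hC hx j
    rw [h0] at this
    nlinarith [sq_nonneg (x j)]
  have hi : x i = 1 := by
    have := hx.2
    rw [← Finset.add_sum_erase Finset.univ x (Finset.mem_univ i)] at this
    have hz2 : ∑ j ∈ Finset.univ.erase i, x j = 0 :=
      Finset.sum_eq_zero fun j hj => hz j (Finset.mem_erase.1 hj).1
    linarith
  exact eq_vertex_of_coord_one hx hi

lemma DF_nonvertex (hC : IsRIM C) {x : Fin n → ℝ} (hx : x ∈ simplex n)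
    (hv : ∀ i, x ≠ vertex n i) : ∀ i, DF C x ≠ vertex n i := by
  intro i h
  exact hv i (eq_vertex_of_DF_eq_vertex C hC hx h)

/-- coordinates of non-vertex simplex points are < 1 -/
lemma coord_lt_one {x : Fin n → ℝ} (hx : x ∈ simplex n)
    (hv : ∀ i, x ≠ vertex n i) (i : Fin n) : x i < 1 := by
  rcases lt_or_eq_of_le (simplex_le_one hx i) with h | h
  · exact h
  · exact absurd (eq_vertex_of_coord_one hx h) (hv i)

lemma continuous_DF : Continuous (DF C) := by
  apply continuous_pi
  intro i
  unfold DF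
  fun_prop

end DFbasic

section Mat

variable {n : ℕ} {C : Matrix (Fin n) (Fin n) ℝ}

lemma pow_entry_nonneg (hC : IsRIM C) : ∀ (k : ℕ) (i j : Fin n), 0 ≤ (C ^ k) i j := by
  intro k
  induction k with
  | zero => intro i j; simp [Matrix.one_apply]; split <;> norm_num
  | succ k ih =>
    intro i j
    rw [pow_succ', Matrix.mul_apply]
    exact Finset.sum_nonneg fun l _ => mul_nonneg (hC.1 i l) (ih l j)

lemma exists_pos_term {A : Finset (Fin n)} {f : Fin n → ℝ}
    (h0 : ∀ i ∈ A, 0 ≤ f i) (h : 0 < ∑ i ∈ A, f i) : ∃ i ∈ A, 0 < f i := by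
  by_contra hc
  push_neg at hc
  have : ∑ i ∈ A, f i ≤ 0 := Finset.sum_nonpos fun i hi => hc i hi
  linarith

/-- decomposition of a power positivity: C^(k+1) = C * C^k -/
lemma pow_succ_pos_entry (hC : IsRIM C) {k : ℕ} {j i : Fin n} (h : 0 < (C ^ (k + 1)) j i) :
    ∃ l, 0 < C j l ∧ 0 < (C ^ k) l i := by
  rw [pow_succ', Matrix.mul_apply] at h
  obtain ⟨l, _, hl⟩ := exists_pos_term
    (fun l _ => mul_nonneg (hC.1 j l) (pow_entry_nonneg hC k l i)) h
  refine ⟨l, ?_, ?_⟩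
  · rcases lt_or_ge 0 (C j l) with h | h
    · exact h
    · exfalso; nlinarith [pow_entry_nonneg hC k l i]
  · nlinarith [hC.1 j l]

/-- trapped-set lemma: a forward-closed set avoiding i₀ cannot reach i₀ -/
lemma trapped (hC : IsRIM C) {P : Fin n → Prop} {i₀ : Fin n} (hP0 : ¬ P i₀)
    (hcl : ∀ j, P j → ∀ i, 0 < C j i → P i) :
    ∀ (k : ℕ) (j : Fin n), P j → (C ^ k) j i₀ = 0 := by
  intro k
  induction k with
  | zero =>
    intro j hj
    have : j ≠ i₀ := fun h => hP0 (h ▸ hj)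
    simp [Matrix.one_apply, this]
  | succ k ih =>
    intro j hj
    rw [pow_succ', Matrix.mul_apply]
    apply Finset.sum_eq_zero
    intro l _
    rcases lt_or_ge 0 (C j l) with h | h
    · rw [ih l (hcl j hj l h), mul_zero]
    · have : C j l = 0 := le_antisymm h (hC.1 j l)
      rw [this, zero_mul]

end Mat

section Struct

variable {n : ℕ} {C : Matrix (Fin n) (Fin n) ℝ} {r : ℕ}

/-- leaf rows are e₀ -/
lemma leaf_row (hC : IsRIM C) {n0 : Fin n} (hn0 : (n0 : ℕ) = 0)
    {j : Fin n} (hj1 : 1 ≤ (j : ℕ)) (hjr : (j : ℕ) < r)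
    (hstar1 : ∀ j : Fin n, 1 ≤ (j : ℕ) → (j : ℕ) < r → C j n0 = 1)
    {i : Fin n} (hi : i ≠ n0) : C j i = 0 := by
  have hrow := hC.2.1 j
  have h1 := hstar1 j hj1 hjr
  have hsum : ∑ k ∈ Finset.univ.erase n0, C j k = 0 := by
    rw [← Finset.add_sum_erase Finset.univ (C j) (Finset.mem_univ n0)] at hrow
    linarith
  have := Finset.single_le_sum (f := C j) (fun k _ => hC.1 j k)
    (Finset.mem_erase.2 ⟨hi, Finset.mem_univ i⟩)
  have h0 := hC.1 j i
  linarith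

/-- node 0 has no edges into the transient set -/
lemma center_no_S (hC : IsRIM C) (hr : 3 ≤ r)
    {n0 : Fin n} (hn0 : (n0 : ℕ) = 0)
    (hgr : ∀ i : Fin n, GloballyReachable C i ↔ (i : ℕ) < r)
    {i : Fin n} (hi : r ≤ (i : ℕ)) : C n0 i = 0 := by
  by_contra hc
  have hpos : 0 < C n0 i := lt_of_le_of_ne (hC.1 n0 i) (Ne.symm hc)
  have : GloballyReachable C i := by
    intro j hj
    by_cases hj0 : j = n0
    · exact ⟨1, le_refl 1, by rw [pow_one]; exact hj0 ▸ hpos⟩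
    · -- j reaches n0, then n0 → i
      have h0gr : GloballyReachable C n0 := (hgr n0).2 (by omega)
      obtain ⟨k, hk1, hk⟩ := h0gr j hj0
      refine ⟨k + 1, by omega, ?_⟩
      rw [pow_succ, Matrix.mul_apply]
      have : 0 < (C ^ k) j n0 * C n0 i := mul_pos hk hpos
      have hle : (C ^ k) j n0 * C n0 i ≤ ∑ l, (C ^ k) j l * C l i :=
        Finset.single_le_sum (f := fun l => (C ^ k) j l * C l i)
          (fun l _ => mul_nonneg (pow_entry_nonneg hC k j l) (hC.1 l i)) (Finset.mem_univ n0)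
      linarith
  have := (hgr i).1 this
  omega

end Struct

/-- leaves -/
def Lset (n r : ℕ) : Finset (Fin n) :=
  Finset.univ.filter fun j : Fin n => 1 ≤ (j : ℕ) ∧ (j : ℕ) < r

section Sums

variable {n : ℕ} {r : ℕ}

lemma sum_sq_le_sq_sum {A : Finset (Fin n)} {f : Fin n → ℝ}
    (hf : ∀ i ∈ A, 0 ≤ f i) : ∑ i ∈ A, f i ^ 2 ≤ (∑ i ∈ A, f i) ^ 2 := by
  have h1 : ∀ i ∈ A, f i ^ 2 ≤ f i * (∑ j ∈ A, f j) := by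
    intro i hi
    have : f i ≤ ∑ j ∈ A, f j := Finset.single_le_sum hf hi
    nlinarith [hf i hi]
  calc ∑ i ∈ A, f i ^ 2 ≤ ∑ i ∈ A, f i * (∑ j ∈ A, f j) := Finset.sum_le_sum h1
  _ = (∑ i ∈ A, f i) ^ 2 := by rw [← Finset.sum_mul]; ring

lemma sum_sq_add_prod_le {A : Finset (Fin n)} {f : Fin n → ℝ}
    (hf : ∀ i ∈ A, 0 ≤ f i) {a b : Fin n} (ha : a ∈ A) (hb : b ∈ A) (hab : a ≠ b) :
    ∑ i ∈ A, f i ^ 2 + f a * f b ≤ (∑ i ∈ A, f i) ^ 2 := by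
  set s := ∑ i ∈ A, f i with hs
  have hsa : f a + f b ≤ s := by
    rw [hs, ← Finset.add_sum_erase A f ha]
    have : f b ≤ ∑ j ∈ A.erase a, f j :=
      Finset.single_le_sum (fun j hj => hf j (Finset.mem_of_mem_erase hj))
        (Finset.mem_erase.2 ⟨Ne.symm hab, hb⟩)
    linarith
  have key : f a * (s - f a) ≤ ∑ i ∈ A, f i * (s - f i) := by
    apply Finset.single_le_sum (f := fun i => f i * (s - f i)) _ ha
    intro i hi
    have h1 : f i ≤ s := Finset.single_le_sum hf hi
    have h2 := hf i hi
    nlinarith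
  have hid : ∑ i ∈ A, f i * (s - f i) = s ^ 2 - ∑ i ∈ A, f i ^ 2 := by
    have : ∑ i ∈ A, f i * (s - f i) = (∑ i ∈ A, f i) * s - ∑ i ∈ A, f i ^ 2 := by
      rw [Finset.sum_mul, ← Finset.sum_sub_distrib]
      congr 1; funext i; ring
    rw [this, ← hs]; ring
  have h2 : f a * f b ≤ f a * (s - f a) := by
    have := hf a ha
    nlinarith
  rw [hid] at key
  linarith

/-- partition of indices: center, leaves, transient -/
lemma sum_split (hr : 3 ≤ r) {n0 : Fin n} (hn0 : (n0 : ℕ) = 0) (f : Fin n → ℝ) :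
    ∑ j, f j = f n0 + ∑ j ∈ Lset n r, f j + ∑ j ∈ Sset n r, f j := by
  have hdisj : Disjoint (Lset n r) (Sset n r) := by
    rw [Finset.disjoint_left]
    intro j hj hj2
    simp only [Lset, Finset.mem_filter] at hj
    simp only [Sset, Finset.mem_filter] at hj2
    omega
  have hun : Lset n r ∪ Sset n r = Finset.univ.erase n0 := by
    ext j
    simp only [Lset, Sset, Finset.mem_union, Finset.mem_filter, Finset.mem_univ, true_and,
      Finset.mem_erase, and_true]
    constructor
    · intro h
      intro hj; rw [hj] at h; omega
    · intro h
      have : (j : ℕ) ≠ 0 := by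
        intro hc
        exact h (Fin.ext (by omega))
      omega
  rw [← Finset.add_sum_erase Finset.univ f (Finset.mem_univ n0), ← hun,
    Finset.sum_union hdisj]
  ring

end Sums

section Mass

variable {n : ℕ} {C : Matrix (Fin n) (Fin n) ℝ} {r : ℕ} {n0 : Fin n}

lemma n0_not_S (hr : 3 ≤ r) (hn0 : (n0 : ℕ) = 0) : n0 ∉ Sset n r := by
  simp only [Sset, Finset.mem_filter, Finset.mem_univ, true_and, hn0]
  omega

lemma mS_nonneg {x : Fin n → ℝ} (hx : x ∈ simplex n) : 0 ≤ mS r x :=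
  Finset.sum_nonneg fun j _ => hx.1 j

lemma coord_le_mS {x : Fin n → ℝ} (hx : x ∈ simplex n) {j : Fin n}
    (hj : j ∈ Sset n r) : x j ≤ mS r x :=
  Finset.single_le_sum (fun i _ => hx.1 i) hj

lemma mS_le (hr : 3 ≤ r) (hn0 : (n0 : ℕ) = 0) {x : Fin n → ℝ} (hx : x ∈ simplex n) :
    mS r x ≤ 1 - x n0 := by
  have h := sum_split hr hn0 x
  rw [hx.2] at h
  have : 0 ≤ ∑ j ∈ Lset n r, x j := Finset.sum_nonneg fun j _ => hx.1 j
  unfold mS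
  linarith

/-- γ_j := mass of row j into S; vanishes off S -/
lemma gamma_zero (hC : IsRIM C) (hr : 3 ≤ r) (hn0 : (n0 : ℕ) = 0)
    (hgr : ∀ i : Fin n, GloballyReachable C i ↔ (i : ℕ) < r)
    (hstar1 : ∀ j : Fin n, 1 ≤ (j : ℕ) → (j : ℕ) < r → C j n0 = 1)
    {j : Fin n} (hj : (j : ℕ) < r) : ∑ i ∈ Sset n r, C j i = 0 := by
  apply Finset.sum_eq_zero
  intro i hi
  simp only [Sset, Finset.mem_filter, Finset.mem_univ, true_and] at hi
  by_cases hj0 : (j : ℕ) = 0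
  · have : j = n0 := Fin.ext (by omega)
    rw [this]
    exact center_no_S hC hr hn0 hgr hi
  · apply leaf_row hC hn0 (by omega) hj hstar1
    intro hc
    rw [hc, hn0] at hi
    omega

lemma gamma_le_one (hC : IsRIM C) (j : Fin n) : ∑ i ∈ Sset n r, C j i ≤ 1 := by
  rw [← hC.2.1 j]
  exact Finset.sum_le_sum_of_subset_of_nonneg (Finset.subset_univ _)
    (fun i _ _ => hC.1 j i)

lemma mS_DF (hC : IsRIM C) (hr : 3 ≤ r) (hn0 : (n0 : ℕ) = 0)
    (hgr : ∀ i : Fin n, GloballyReachable C i ↔ (i : ℕ) < r)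
    (hstar1 : ∀ j : Fin n, 1 ≤ (j : ℕ) → (j : ℕ) < r → C j n0 = 1)
    (x : Fin n → ℝ) :
    mS r (DF C x) =
      ∑ j ∈ Sset n r, (∑ i ∈ Sset n r, C j i) * yv x j + ∑ j ∈ Sset n r, x j ^ 2 := by
  unfold mS
  rw [DF_sum]
  congr 1
  symm
  apply Finset.sum_subset (Finset.subset_univ _)
  intro j _ hj
  simp only [Sset, Finset.mem_filter, Finset.mem_univ, true_and, not_le] at hj
  rw [gamma_zero hC hr hn0 hgr hstar1 hj, zero_mul]

lemma mS_diff (hC : IsRIM C) (hr : 3 ≤ r) (hn0 : (n0 : ℕ) = 0)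
    (hgr : ∀ i : Fin n, GloballyReachable C i ↔ (i : ℕ) < r)
    (hstar1 : ∀ j : Fin n, 1 ≤ (j : ℕ) → (j : ℕ) < r → C j n0 = 1)
    (x : Fin n → ℝ) :
    mS r x - mS r (DF C x) = ∑ j ∈ Sset n r, (1 - ∑ i ∈ Sset n r, C j i) * yv x j := by
  rw [mS_DF hC hr hn0 hgr hstar1]
  have : mS r x = ∑ j ∈ Sset n r, (yv x j + x j ^ 2) := by
    unfold mS yv
    congr 1; funext j; ring
  rw [this, Finset.sum_add_distrib]
  have h2 : ∀ j ∈ Sset n r, (1 - ∑ i ∈ Sset n r, C j i) * yv x j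
      = yv x j - (∑ i ∈ Sset n r, C j i) * yv x j := fun j _ => by ring
  rw [Finset.sum_congr rfl h2, Finset.sum_sub_distrib]
  ring

lemma mS_antitone (hC : IsRIM C) (hr : 3 ≤ r) (hn0 : (n0 : ℕ) = 0)
    (hgr : ∀ i : Fin n, GloballyReachable C i ↔ (i : ℕ) < r)
    (hstar1 : ∀ j : Fin n, 1 ≤ (j : ℕ) → (j : ℕ) < r → C j n0 = 1)
    {x : Fin n → ℝ} (hx : x ∈ simplex n) : mS r (DF C x) ≤ mS r x := by
  have h := mS_diff hC hr hn0 hgr hstar1 (x := x)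
  have h2 : 0 ≤ ∑ j ∈ Sset n r, (1 - ∑ i ∈ Sset n r, C j i) * yv x j :=
    Finset.sum_nonneg fun j _ => mul_nonneg (by linarith [gamma_le_one (r := r) hC j])
      (yv_nonneg hx j)
  linarith

/-- formula for the new center mass -/
lemma DF_center (hC : IsRIM C) (hr : 3 ≤ r) (hn0 : (n0 : ℕ) = 0)
    (hstar1 : ∀ j : Fin n, 1 ≤ (j : ℕ) → (j : ℕ) < r → C j n0 = 1)
    (x : Fin n → ℝ) :
    DF C x n0 = ∑ j ∈ Lset n r, yv x j + ∑ j ∈ Sset n r, C j n0 * yv x j + x n0 ^ 2 := by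
  rw [DF_apply, sum_split hr hn0 (fun j => C j n0 * yv x j)]
  rw [hC.2.2 n0, zero_mul]
  have : ∑ j ∈ Lset n r, C j n0 * yv x j = ∑ j ∈ Lset n r, yv x j := by
    apply Finset.sum_congr rfl
    intro j hj
    simp only [Lset, Finset.mem_filter, Finset.mem_univ, true_and] at hj
    rw [hstar1 j hj.1 hj.2, one_mul]
  rw [this]
  ring

/-- the key drift inequality for the center coordinate -/
lemma center_drift (hC : IsRIM C) (hr : 3 ≤ r) (hn0 : (n0 : ℕ) = 0)
    (hstar1 : ∀ j : Fin n, 1 ≤ (j : ℕ) → (j : ℕ) < r → C j n0 = 1)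
    {x : Fin n → ℝ} (hx : x ∈ simplex n) :
    x n0 + mS r x * (1 - 2 * x n0 - mS r x) ≤ DF C x n0 := by
  rw [DF_center hC hr hn0 hstar1]
  set s := ∑ j ∈ Lset n r, x j with hs
  have h1 : ∑ j ∈ Lset n r, yv x j = s - ∑ j ∈ Lset n r, x j ^ 2 := by
    simp only [yv]
    rw [hs, ← Finset.sum_sub_distrib]
  have h2 : ∑ j ∈ Lset n r, x j ^ 2 ≤ s ^ 2 := sum_sq_le_sq_sum fun i _ => hx.1 i
  have h3 : 0 ≤ ∑ j ∈ Sset n r, C j n0 * yv x j :=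
    Finset.sum_nonneg fun j _ => mul_nonneg (hC.1 j n0) (yv_nonneg hx j)
  have h4 : s = 1 - x n0 - mS r x := by
    have := sum_split hr hn0 x
    rw [hx.2] at this
    unfold mS
    linarith
  have h5 : x n0 + mS r x * (1 - 2 * x n0 - mS r x) = s - s ^ 2 + x n0 ^ 2 := by
    rw [h4]; ring
  linarith

end Mass

section Face

variable {n : ℕ} {C : Matrix (Fin n) (Fin n) ℝ} {r : ℕ} {n0 : Fin n}

lemma pair_le_one {x : Fin n → ℝ} (hx : x ∈ simplex n) {i j : Fin n} (hij : i ≠ j) :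
    x i + x j ≤ 1 := by
  have h1 : ∑ k, x k = x i + ∑ k ∈ Finset.univ.erase i, x k :=
    (Finset.add_sum_erase Finset.univ x (Finset.mem_univ i)).symm
  have h2 : x j ≤ ∑ k ∈ Finset.univ.erase i, x k :=
    Finset.single_le_sum (fun k _ => hx.1 k)
      (Finset.mem_erase.2 ⟨Ne.symm hij, Finset.mem_univ j⟩)
  rw [hx.2] at h1
  linarith

/-- entrywise version: no edges from reachable class into S -/
lemma entry_zero (hC : IsRIM C) (hr : 3 ≤ r) (hn0 : (n0 : ℕ) = 0)
    (hgr : ∀ i : Fin n, GloballyReachable C i ↔ (i : ℕ) < r)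
    (hstar1 : ∀ j : Fin n, 1 ≤ (j : ℕ) → (j : ℕ) < r → C j n0 = 1)
    {j i : Fin n} (hj : (j : ℕ) < r) (hi : r ≤ (i : ℕ)) : C j i = 0 := by
  by_cases hj0 : (j : ℕ) = 0
  · have : j = n0 := Fin.ext (by omega)
    rw [this]
    exact center_no_S hC hr hn0 hgr hi
  · apply leaf_row hC hn0 (by omega) hj hstar1
    intro hc
    rw [hc, hn0] at hi
    omega

/-- the leaf-face is invariant: S-coordinates stay 0 -/
lemma face_invariant (hC : IsRIM C) (hr : 3 ≤ r) (hn0 : (n0 : ℕ) = 0)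
    (hgr : ∀ i : Fin n, GloballyReachable C i ↔ (i : ℕ) < r)
    (hstar1 : ∀ j : Fin n, 1 ≤ (j : ℕ) → (j : ℕ) < r → C j n0 = 1)
    {x : Fin n → ℝ} (hx : x ∈ simplex n) (hface : ∀ j ∈ Sset n r, x j = 0) :
    ∀ j ∈ Sset n r, DF C x j = 0 := by
  intro j hj
  simp only [Sset, Finset.mem_filter, Finset.mem_univ, true_and] at hj
  rw [DF_apply]
  have hx0 : x j = 0 := hface j (by simp [Sset, hj])
  rw [hx0]
  have : ∀ k : Fin n, C k j * yv x k = 0 := by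
    intro k
    by_cases hk : r ≤ (k : ℕ)
    · have : yv x k = 0 := by
        have := hface k (by simp [Sset, hk])
        simp [yv, this]
      rw [this, mul_zero]
    · rw [entry_zero hC hr hn0 hgr hstar1 (by omega) hj, zero_mul]
  rw [Finset.sum_congr rfl fun k _ => this k]
  simp

lemma face_center_eq (hC : IsRIM C) (hr : 3 ≤ r) (hn0 : (n0 : ℕ) = 0)
    (hstar1 : ∀ j : Fin n, 1 ≤ (j : ℕ) → (j : ℕ) < r → C j n0 = 1)
    {x : Fin n → ℝ} (hface : ∀ j ∈ Sset n r, x j = 0) :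
    DF C x n0 = ∑ j ∈ Lset n r, yv x j + x n0 ^ 2 := by
  rw [DF_center hC hr hn0 hstar1]
  have : ∑ j ∈ Sset n r, C j n0 * yv x j = 0 := by
    apply Finset.sum_eq_zero
    intro j hj
    have := hface j hj
    simp [yv, this]
  rw [this]
  ring

/-- strict increase of the center on the face when two leaves are occupied -/
lemma face_center_strict (hC : IsRIM C) (hr : 3 ≤ r) (hn0 : (n0 : ℕ) = 0)
    (hstar1 : ∀ j : Fin n, 1 ≤ (j : ℕ) → (j : ℕ) < r → C j n0 = 1)
    {x : Fin n → ℝ} (hx : x ∈ simplex n) (hface : ∀ j ∈ Sset n r, x j = 0)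
    {a b : Fin n} (ha : a ∈ Lset n r) (hb : b ∈ Lset n r) (hab : a ≠ b)
    (hxa : 0 < x a) (hxb : 0 < x b) : x n0 < DF C x n0 := by
  rw [face_center_eq hC hr hn0 hstar1 hface]
  set s := ∑ j ∈ Lset n r, x j with hs
  have h1 : ∑ j ∈ Lset n r, yv x j = s - ∑ j ∈ Lset n r, x j ^ 2 := by
    simp only [yv]
    rw [hs, ← Finset.sum_sub_distrib]
  have h2 : ∑ j ∈ Lset n r, x j ^ 2 + x a * x b ≤ s ^ 2 :=
    sum_sq_add_prod_le (fun i _ => hx.1 i) ha hb hab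
  have h4 : s = 1 - x n0 := by
    have h5 := sum_split hr hn0 x
    rw [hx.2] at h5
    have h6 : ∑ j ∈ Sset n r, x j = 0 := Finset.sum_eq_zero hface
    rw [h6] at h5
    linarith
  have hpos : 0 < x a * x b := mul_pos hxa hxb
  have : x n0 = s - s ^ 2 + x n0 ^ 2 := by rw [h4]; ring
  linarith

end Face

section Fixed

variable {n : ℕ} {C : Matrix (Fin n) (Fin n) ℝ} {r : ℕ} {n0 : Fin n}

lemma fixed_is_vertex (hn : 3 ≤ n) (hC : IsRIM C) (hr : 3 ≤ r) (hrn : r ≤ n)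
    (hn0 : (n0 : ℕ) = 0)
    (hgr : ∀ i : Fin n, GloballyReachable C i ↔ (i : ℕ) < r)
    (hstar1 : ∀ j : Fin n, 1 ≤ (j : ℕ) → (j : ℕ) < r → C j n0 = 1)
    (hstar2 : ∀ j : Fin n, 1 ≤ (j : ℕ) → (j : ℕ) < r → 0 < C n0 j)
    {x : Fin n → ℝ} (hx : x ∈ simplex n) (hfix : DF C x = x) :
    ∃ i, x = vertex n i := by
  -- eigen-equation for y
  have heig : ∀ i, ∑ j, C j i * yv x j = yv x i := by
    intro i
    have h := congrFun hfix i
    rw [DF_apply] at h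
    show ∑ j, C j i * yv x j = x i - x i ^ 2
    linarith
  -- y vanishes on S
  have hterm : ∀ j ∈ Sset n r, (1 - ∑ i ∈ Sset n r, C j i) * yv x j = 0 := by
    have hdiff := mS_diff hC hr hn0 hgr hstar1 (x := x)
    rw [hfix] at hdiff
    have hzero : ∑ j ∈ Sset n r, (1 - ∑ i ∈ Sset n r, C j i) * yv x j = 0 := by linarith
    intro j hj
    have hnn : ∀ j ∈ Sset n r, 0 ≤ (1 - ∑ i ∈ Sset n r, C j i) * yv x j := fun j _ =>
      mul_nonneg (by linarith [gamma_le_one (r := r) hC j]) (yv_nonneg hx j)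
    exact (Finset.sum_eq_zero_iff_of_nonneg hnn).1 hzero j hj
  have hSy : ∀ j ∈ Sset n r, yv x j = 0 := by
    intro j hj
    by_contra hne
    have hyj : 0 < yv x j := lt_of_le_of_ne (yv_nonneg hx j) (Ne.symm hne)
    simp only [Sset, Finset.mem_filter, Finset.mem_univ, true_and] at hj
    -- trapped set argument
    have hP0 : ¬ (r ≤ (n0 : ℕ) ∧ 0 < yv x n0) := by
      rw [hn0]; omega
    have hcl : ∀ l : Fin n, (r ≤ (l : ℕ) ∧ 0 < yv x l) → ∀ i, 0 < C l i →
        (r ≤ (i : ℕ) ∧ 0 < yv x i) := by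
      rintro l ⟨hl, hyl⟩ i hCli
      have hγ : (1 - ∑ i ∈ Sset n r, C l i) * yv x l = 0 :=
        hterm l (by simp [Sset, hl])
      have hγ1 : ∑ i ∈ Sset n r, C l i = 1 := by
        rcases mul_eq_zero.1 hγ with h | h
        · linarith
        · linarith
      constructor
      · by_contra hir
        -- then C l i would be part of the complement sum which is 0
        have hsplit := Finset.sum_filter_add_sum_filter_not Finset.univ
          (fun i : Fin n => r ≤ (i : ℕ)) (C l)
        rw [hC.2.1 l] at hsplit
        have : ∑ i ∈ Finset.univ.filter (fun i : Fin n => ¬ r ≤ (i : ℕ)), C l i = 0 := by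
          have : (Sset n r) = Finset.univ.filter (fun i : Fin n => r ≤ (i : ℕ)) := rfl
          rw [← this] at hsplit
          linarith [hγ1]
        have hmem : i ∈ Finset.univ.filter (fun i : Fin n => ¬ r ≤ (i : ℕ)) := by
          simp only [Finset.mem_filter, Finset.mem_univ, true_and]
          omega
        have := (Finset.sum_eq_zero_iff_of_nonneg (fun k _ => hC.1 l k)).1 this i hmem
        linarith
      · have h1 : C l i * yv x l ≤ ∑ k, C k i * yv x k :=
          Finset.single_le_sum (fun k _ => mul_nonneg (hC.1 k i) (yv_nonneg hx k))
            (Finset.mem_univ l)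
        rw [heig i] at h1
        nlinarith
    have htrap := trapped hC hP0 hcl
    have hjn0 : j ≠ n0 := by
      intro h; rw [h, hn0] at hj; omega
    obtain ⟨k, _, hk⟩ := (hgr n0).2 (by omega) j hjn0
    rw [htrap k j ⟨hj, hyj⟩] at hk
    exact lt_irrefl _ hk
  -- leaf equations
  have hyleaf : ∀ i ∈ Lset n r, yv x i = C n0 i * yv x n0 := by
    intro i hi
    simp only [Lset, Finset.mem_filter, Finset.mem_univ, true_and] at hi
    have h := heig i
    rw [sum_split hr hn0 (fun j => C j i * yv x j)] at h
    have hiL : ∑ j ∈ Lset n r, C j i * yv x j = 0 := by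
      apply Finset.sum_eq_zero
      intro j hj
      simp only [Lset, Finset.mem_filter, Finset.mem_univ, true_and] at hj
      by_cases hji : j = i
      · rw [hji, hC.2.2 i, zero_mul]
      · rw [leaf_row hC hn0 hj.1 hj.2 hstar1 (by
          intro hc; rw [hc, hn0] at hi; omega), zero_mul]
    have hiS : ∑ j ∈ Sset n r, C j i * yv x j = 0 := by
      apply Finset.sum_eq_zero
      intro j hj
      rw [hSy j hj, mul_zero]
    rw [hiL, hiS] at h
    linarith
  have hycenter : yv x n0 = ∑ j ∈ Lset n r, yv x j := by
    have h := heig n0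
    rw [sum_split hr hn0 (fun j => C j n0 * yv x j)] at h
    have h1 : C n0 n0 * yv x n0 = 0 := by rw [hC.2.2 n0, zero_mul]
    have h2 : ∑ j ∈ Lset n r, C j n0 * yv x j = ∑ j ∈ Lset n r, yv x j := by
      apply Finset.sum_congr rfl
      intro j hj
      simp only [Lset, Finset.mem_filter, Finset.mem_univ, true_and] at hj
      rw [hstar1 j hj.1 hj.2, one_mul]
    have h3 : ∑ j ∈ Sset n r, C j n0 * yv x j = 0 := by
      apply Finset.sum_eq_zero
      intro j hj
      rw [hSy j hj, mul_zero]
    rw [h1, h2, h3] at h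
    linarith
  -- case on yv x n0
  rcases eq_or_lt_of_le (yv_nonneg hx n0) with hy0 | hy0
  · -- all y vanish, so x is a vertex
    by_contra hnv
    push_neg at hnv
    obtain ⟨j, hj0, hj1⟩ := exists_interior_coord hx hnv
    have : yv x j = 0 := by
      by_cases hjr : r ≤ (j : ℕ)
      · exact hSy j (by simp [Sset, hjr])
      · by_cases hjz : (j : ℕ) = 0
        · have : j = n0 := Fin.ext (by omega)
          rw [this, ← hy0]
        · rw [hyleaf j (by simp [Lset]; omega), ← hy0]
          ring
    have := yv_pos hj0 hj1
    linarith
  · -- interior center: contradiction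
    exfalso
    have hx0 : 0 < x n0 ∧ x n0 < 1 := (yv_pos_iff hx n0).1 hy0
    -- two leaves
    have h1n : 1 < n := by omega
    have h2n : 2 < n := by omega
    set a : Fin n := ⟨1, h1n⟩ with hadef
    set b : Fin n := ⟨2, h2n⟩ with hbdef
    have haL : a ∈ Lset n r := by simp [Lset, hadef]; omega
    have hbL : b ∈ Lset n r := by simp [Lset, hbdef]; omega
    have hab : a ≠ b := by
      intro h
      have := congrArg (Fin.val) h
      simp [hadef, hbdef] at this
    have hxa : 0 < x a := by
      have hya : yv x a = C n0 a * yv x n0 := hyleaf a haL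
      have := hstar2 a (by simp [hadef]) (by simp [hadef]; omega)
      have hpos : 0 < yv x a := by rw [hya]; exact mul_pos this hy0
      exact ((yv_pos_iff hx a).1 hpos).1
    have hxb : 0 < x b := by
      have hyb : yv x b = C n0 b * yv x n0 := hyleaf b hbL
      have := hstar2 b (by simp [hbdef]) (by simp [hbdef]; omega)
      have hpos : 0 < yv x b := by rw [hyb]; exact mul_pos this hy0
      exact ((yv_pos_iff hx b).1 hpos).1
    -- S-coordinates vanish
    have hface : ∀ j ∈ Sset n r, x j = 0 := by
      intro j hj
      have hyj := hSy j hj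
      simp only [Sset, Finset.mem_filter, Finset.mem_univ, true_and] at hj
      have hjn0 : j ≠ n0 := by intro h; rw [h, hn0] at hj; omega
      have : x j * (1 - x j) = 0 := by unfold yv at hyj; nlinarith [hyj]
      rcases mul_eq_zero.1 this with h | h
      · exact h
      · exfalso
        have := pair_le_one hx hjn0
        linarith [hx0.1]
    -- now the center equation gives equality in the square-sum inequality
    set s := ∑ j ∈ Lset n r, x j with hs
    have hsum : ∑ j ∈ Lset n r, yv x j = s - ∑ j ∈ Lset n r, x j ^ 2 := by
      simp only [yv]
      rw [hs, ← Finset.sum_sub_distrib]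
    have h4 : s = 1 - x n0 := by
      have h5 := sum_split hr hn0 x
      rw [hx.2] at h5
      have h6 : ∑ j ∈ Sset n r, x j = 0 := Finset.sum_eq_zero hface
      rw [h6] at h5
      linarith
    have h2 : ∑ j ∈ Lset n r, x j ^ 2 + x a * x b ≤ s ^ 2 :=
      sum_sq_add_prod_le (fun i _ => hx.1 i) haL hbL hab
    have hxab : 0 < x a * x b := mul_pos hxa hxb
    -- yv x n0 = s - Σ x², and yv x n0 = x n0 (1 - x n0) = (1-s)s
    have h7 : yv x n0 = s - ∑ j ∈ Lset n r, x j ^ 2 := by rw [hycenter, hsum]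
    have h8 : yv x n0 = (1 - s) - (1 - s) ^ 2 := by
      unfold yv; rw [h4]; ring
    nlinarith
end Fixed

section Dyn

variable {n : ℕ} {C : Matrix (Fin n) (Fin n) ℝ} {r : ℕ} {n0 : Fin n}
variable {x : ℕ → Fin n → ℝ}

lemma orbit_simplex (hC : IsRIM C) (hx0 : x 0 ∈ simplex n)
    (hrec : ∀ t, x (t + 1) = DF C (x t)) : ∀ t, x t ∈ simplex n := by
  intro t
  induction t with
  | zero => exact hx0
  | succ t ih => rw [hrec]; exact DF_mem_simplex C hC ih

lemma orbit_nonvertex (hC : IsRIM C) (hx0 : x 0 ∈ simplex n)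
    (hnv : ∀ i, x 0 ≠ vertex n i) (hrec : ∀ t, x (t + 1) = DF C (x t)) :
    ∀ t i, x t ≠ vertex n i := by
  intro t
  induction t with
  | zero => exact hnv
  | succ t ih =>
    rw [hrec]
    exact DF_nonvertex C hC (orbit_simplex hC hx0 hrec t) ih

lemma ystep (hC : IsRIM C) (hx0 : x 0 ∈ simplex n)
    (hnv : ∀ i, x 0 ≠ vertex n i) (hrec : ∀ t, x (t + 1) = DF C (x t))
    {t : ℕ} {j i : Fin n} (hy : 0 < yv (x t) j) (hij : 0 < C j i) :
    0 < yv (x (t + 1)) i := by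
  have hxt := orbit_simplex hC hx0 hrec t
  have h1 : C j i * yv (x t) j ≤ DF C (x t) i := DF_ge_term C hC hxt i j
  have h2 : 0 < x (t + 1) i := by
    rw [hrec]
    calc (0:ℝ) < C j i * yv (x t) j := mul_pos hij hy
    _ ≤ DF C (x t) i := h1
  have h3 : x (t + 1) i < 1 :=
    coord_lt_one (orbit_simplex hC hx0 hrec (t + 1))
      (orbit_nonvertex hC hx0 hnv hrec (t + 1)) i
  exact yv_pos h2 h3

lemma yprop (hC : IsRIM C) (hx0 : x 0 ∈ simplex n)
    (hnv : ∀ i, x 0 ≠ vertex n i) (hrec : ∀ t, x (t + 1) = DF C (x t)) :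
    ∀ (k t : ℕ) (j : Fin n), 0 < yv (x t) j → 0 < (C ^ k) j n0 →
      0 < yv (x (t + k)) n0 := by
  intro k
  induction k with
  | zero =>
    intro t j hy hp
    have : j = n0 := by
      by_contra hne
      rw [pow_zero, Matrix.one_apply_ne hne] at hp
      exact lt_irrefl _ hp
    rw [← this]
    exact hy
  | succ k ih =>
    intro t j hy hp
    obtain ⟨l, hl1, hl2⟩ := pow_succ_pos_entry hC hp
    have := ih (t + 1) l (ystep hC hx0 hnv hrec hy hl1) hl2
    have harith : t + 1 + k = t + (k + 1) := by omega
    rwa [harith] at this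

lemma center_eventually_pos (hC : IsRIM C) (hr : 3 ≤ r) (hn0 : (n0 : ℕ) = 0)
    (hgr : ∀ i : Fin n, GloballyReachable C i ↔ (i : ℕ) < r)
    (hx0 : x 0 ∈ simplex n)
    (hnv : ∀ i, x 0 ≠ vertex n i) (hrec : ∀ t, x (t + 1) = DF C (x t)) :
    ∃ T, ∀ t, T ≤ t → 0 < x t n0 := by
  obtain ⟨j, hj0, hj1⟩ := exists_interior_coord hx0 hnv
  have hyj : 0 < yv (x 0) j := yv_pos hj0 hj1
  have hstep : ∃ T, 0 < yv (x T) n0 := by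
    by_cases hje : j = n0
    · exact ⟨0, hje ▸ hyj⟩
    · obtain ⟨k, _, hk⟩ := (hgr n0).2 (by omega) j hje
      exact ⟨0 + k, yprop hC hx0 hnv hrec k 0 j hyj hk⟩
  obtain ⟨T, hT⟩ := hstep
  refine ⟨T, fun t ht => ?_⟩
  obtain ⟨s, rfl⟩ := Nat.exists_eq_add_of_le ht
  clear ht
  induction s with
  | zero => exact ((yv_pos_iff (orbit_simplex hC hx0 hrec T) n0).1 hT).1
  | succ s ih =>
    have harith : T + (s + 1) = (T + s) + 1 := by omega
    rw [harith, hrec]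
    calc (0:ℝ) < x (T + s) n0 ^ 2 := by positivity
    _ ≤ DF C (x (T + s)) n0 := DF_ge_sq C hC (orbit_simplex hC hx0 hrec (T + s)) n0

lemma isCompact_simplex : IsCompact (simplex n) := by
  have hsub : simplex n ⊆ Set.univ.pi (fun _ : Fin n => Set.Icc (0:ℝ) 1) := by
    intro x hx i _
    exact ⟨hx.1 i, simplex_le_one hx i⟩
  have hclosed : IsClosed (simplex n) := by
    have h1 : simplex n =
        (⋂ i, {x : Fin n → ℝ | 0 ≤ x i}) ∩ {x : Fin n → ℝ | ∑ i, x i = 1} := by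
      ext x
      simp [simplex, Set.mem_iInter]
    rw [h1]
    apply IsClosed.inter
    · exact isClosed_iInter fun i => isClosed_le continuous_const (continuous_apply i)
    · exact isClosed_eq (continuous_finset_sum _ fun i _ => continuous_apply i)
        continuous_const
  exact (isCompact_univ_pi fun _ => isCompact_Icc).of_isClosed_subset hclosed hsub

lemma continuous_mS : Continuous (mS r : (Fin n → ℝ) → ℝ) :=
  continuous_finset_sum _ fun j _ => continuous_apply j

end Dyn

open Filter Topology

section Mzero

variable {n : ℕ} {C : Matrix (Fin n) (Fin n) ℝ} {r : ℕ} {n0 : Fin n}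
variable {x : ℕ → Fin n → ℝ}

lemma iterate_orbit (hrec : ∀ t, x (t + 1) = DF C (x t)) :
    ∀ (t s : ℕ), x (s + t) = (DF C)^[t] (x s) := by
  intro t
  induction t with
  | zero => intro s; rfl
  | succ t ih =>
    intro s
    have : s + (t + 1) = (s + t) + 1 := by omega
    rw [this, hrec, ih s, ← Function.iterate_succ_apply' (DF C) t (x s)]

lemma iterate_simplex (hC : IsRIM C) {w : Fin n → ℝ} (hw : w ∈ simplex n) :
    ∀ t, (DF C)^[t] w ∈ simplex n := by
  intro t
  induction t with
  | zero => exact hw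
  | succ t ih => rw [Function.iterate_succ_apply']; exact DF_mem_simplex C hC ih

lemma mS_tendsto_zero (hn : 3 ≤ n) (hC : IsRIM C) (hr : 3 ≤ r) (hrn : r ≤ n)
    (hn0 : (n0 : ℕ) = 0)
    (hgr : ∀ i : Fin n, GloballyReachable C i ↔ (i : ℕ) < r)
    (hstar1 : ∀ j : Fin n, 1 ≤ (j : ℕ) → (j : ℕ) < r → C j n0 = 1)
    (hx0 : x 0 ∈ simplex n)
    (hnv : ∀ i, x 0 ≠ vertex n i) (hrec : ∀ t, x (t + 1) = DF C (x t)) :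
    Tendsto (fun t => mS r (x t)) atTop (𝓝 0) := by
  have hsimp := orbit_simplex hC hx0 hrec
  set m : ℕ → ℝ := fun t => mS r (x t) with hm
  have hanti : Antitone m := antitone_nat_of_succ_le fun t => by
    rw [hm]; dsimp only; rw [hrec]
    exact mS_antitone hC hr hn0 hgr hstar1 (hsimp t)
  have hbdd : BddBelow (Set.range m) := by
    refine ⟨0, ?_⟩
    rintro v ⟨t, rfl⟩
    exact mS_nonneg (hsimp t)
  have hten : Tendsto m atTop (𝓝 (⨅ t, m t)) := tendsto_atTop_ciInf hanti hbdd
  set μ := ⨅ t, m t with hμdef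
  suffices hμ0 : μ = 0 by rwa [hμ0] at hten
  by_contra hμne
  have hμ0 : 0 ≤ μ := le_ciInf fun t => mS_nonneg (hsimp t)
  have hμpos : 0 < μ := lt_of_le_of_ne hμ0 (Ne.symm hμne)
  -- μ < 1
  obtain ⟨T, hT⟩ := center_eventually_pos hC hr hn0 hgr hx0 hnv hrec
  have hμlt1 : μ < 1 := by
    calc μ ≤ m T := ciInf_le hbdd T
    _ ≤ 1 - x T n0 := mS_le hr hn0 (hsimp T)
    _ < 1 := by linarith [hT T (le_refl T)]
  -- limit point of the orbit
  obtain ⟨w, hwmem, φ, hφmono, hφten⟩ := isCompact_simplex.tendsto_subseq hsimp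
  have hφge : ∀ k, k ≤ φ k := fun k => hφmono.le_apply
  -- every iterate of w has transient mass exactly μ
  have hwit : ∀ t, mS r ((DF C)^[t] w) = μ := by
    intro t
    have h1 : Tendsto (fun k => m (φ k + t)) atTop (𝓝 μ) := by
      apply hten.comp
      apply tendsto_atTop_mono (fun k => le_trans (hφge k) (Nat.le_add_right _ t))
      exact tendsto_id
    have h2 : Tendsto (fun k => (DF C)^[t] (x (φ k))) atTop (𝓝 ((DF C)^[t] w)) := by
      have hc : Continuous ((DF C)^[t]) := Continuous.iterate (continuous_DF C) t
      exact (hc.tendsto w).comp hφten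
    have h3 : (fun k => m (φ k + t)) = fun k => mS r ((DF C)^[t] (x (φ k))) := by
      funext k
      rw [hm]; dsimp only
      rw [iterate_orbit hrec]
    rw [h3] at h1
    exact tendsto_nhds_unique ((continuous_mS.tendsto _).comp h2) h1
  have hwsimp := iterate_simplex hC hwmem
  -- S-coordinates of iterates are at most μ
  have hwle : ∀ t, ∀ j ∈ Sset n r, (DF C)^[t] w j ≤ μ := by
    intro t j hj
    calc (DF C)^[t] w j ≤ mS r ((DF C)^[t] w) := coord_le_mS (hwsimp t) hj
    _ = μ := hwit t
  -- y vanishes at S-nodes with escape mass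
  have hexit : ∀ t, ∀ j ∈ Sset n r, (∑ i ∈ Sset n r, C j i) < 1 → (DF C)^[t] w j = 0 := by
    intro t j hjS hγ
    have hd := mS_diff hC hr hn0 hgr hstar1 (x := (DF C)^[t] w) (C := C)
    rw [← Function.iterate_succ_apply' (DF C) t w, hwit, hwit] at hd
    have hzero : ∑ j ∈ Sset n r, (1 - ∑ i ∈ Sset n r, C j i) * yv ((DF C)^[t] w) j = 0 := by
      linarith
    have hnn : ∀ j ∈ Sset n r, 0 ≤ (1 - ∑ i ∈ Sset n r, C j i) * yv ((DF C)^[t] w) j :=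
      fun j _ => mul_nonneg (by linarith [gamma_le_one (r := r) hC j])
        (yv_nonneg (hwsimp t) j)
    have := (Finset.sum_eq_zero_iff_of_nonneg hnn).1 hzero j hjS
    have hyj : yv ((DF C)^[t] w) j = 0 := by
      rcases mul_eq_zero.1 this with h | h
      · linarith
      · exact h
    have h01 : (DF C)^[t] w j * (1 - (DF C)^[t] w j) = 0 := by
      unfold yv at hyj; nlinarith [hyj]
    rcases mul_eq_zero.1 h01 with h | h
    · exact h
    · exfalso
      have := hwle t j hjS
      linarith
  -- strong induction: any S-node that can reach the complement is always empty
  have hkey : ∀ k, ∀ j ∈ Sset n r,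
      0 < ∑ i ∈ Finset.univ.filter (fun i : Fin n => ¬ r ≤ (i : ℕ)), (C ^ k) j i →
      ∀ t, (DF C)^[t] w j = 0 := by
    intro k
    induction k using Nat.strong_induction_on with
    | _ k ih =>
      intro j hjS hδ t
      match k, hδ with
      | 0, hδ =>
        exfalso
        simp only [Sset, Finset.mem_filter, Finset.mem_univ, true_and] at hjS
        have : ∑ i ∈ Finset.univ.filter (fun i : Fin n => ¬ r ≤ (i : ℕ)),
            ((C : Matrix (Fin n) (Fin n) ℝ) ^ 0) j i = 0 := by
          apply Finset.sum_eq_zero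
          intro i hi
          simp only [Finset.mem_filter, Finset.mem_univ, true_and] at hi
          have : j ≠ i := by
            intro h; rw [h] at hjS; omega
          rw [pow_zero]
          exact Matrix.one_apply_ne this
        rw [this] at hδ
        exact lt_irrefl _ hδ
      | k + 1, hδ =>
        -- decompose the power
        have hswap : ∑ i ∈ Finset.univ.filter (fun i : Fin n => ¬ r ≤ (i : ℕ)),
            (C ^ (k + 1)) j i =
            ∑ l, C j l * ∑ i ∈ Finset.univ.filter (fun i : Fin n => ¬ r ≤ (i : ℕ)),
              (C ^ k) l i := by
          rw [Finset.sum_congr rfl (fun i (_ : i ∈ Finset.univ.filter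
            (fun i : Fin n => ¬ r ≤ (i : ℕ))) => by rw [pow_succ', Matrix.mul_apply])]
          rw [Finset.sum_comm]
          exact Finset.sum_congr rfl fun l _ => (Finset.mul_sum _ _ _).symm
        rw [hswap] at hδ
        have hnn : ∀ l : Fin n, (0:ℝ) ≤ C j l *
            ∑ i ∈ Finset.univ.filter (fun i : Fin n => ¬ r ≤ (i : ℕ)), (C ^ k) l i :=
          fun l => mul_nonneg (hC.1 j l)
            (Finset.sum_nonneg fun i _ => pow_entry_nonneg hC k l i)
        obtain ⟨l, _, hl⟩ := exists_pos_term (fun l _ => hnn l) hδ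
        have hCjl : 0 < C j l := by
          rcases lt_or_ge 0 (C j l) with h | h
          · exact h
          · exfalso
            have h1 : C j l = 0 := le_antisymm h (hC.1 j l)
            rw [h1, zero_mul] at hl
            exact lt_irrefl _ hl
        have hδl : 0 < ∑ i ∈ Finset.univ.filter
            (fun i : Fin n => ¬ r ≤ (i : ℕ)), (C ^ k) l i := by
          rcases lt_or_ge 0 (∑ i ∈ Finset.univ.filter
              (fun i : Fin n => ¬ r ≤ (i : ℕ)), (C ^ k) l i) with h | h
          · exact h
          · exfalso
            have h2 := mul_le_mul_of_nonneg_left h (le_of_lt hCjl)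
            rw [mul_zero] at h2
            linarith
        by_cases hlr : r ≤ (l : ℕ)
        · -- l stays in S : use the inductive hypothesis at l
          have hlz : ∀ t, (DF C)^[t] w l = 0 :=
            ih k (by omega) l (by simp [Sset, hlr]) hδl
          have h1 : C j l * yv ((DF C)^[t] w) j ≤ DF C ((DF C)^[t] w) l :=
            DF_ge_term C hC (hwsimp t) l j
          rw [← Function.iterate_succ_apply' (DF C) t w, hlz (t + 1)] at h1
          have hyj : yv ((DF C)^[t] w) j = 0 := by
            have := yv_nonneg (hwsimp t) j
            nlinarith
          have h01 : (DF C)^[t] w j * (1 - (DF C)^[t] w j) = 0 := by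
            unfold yv at hyj; nlinarith [hyj]
          rcases mul_eq_zero.1 h01 with h | h
          · exact h
          · exfalso
            have := hwle t j hjS
            linarith
        · -- j can escape in one step
          apply hexit t j hjS
          have hsplit := Finset.sum_filter_add_sum_filter_not Finset.univ
            (fun i : Fin n => r ≤ (i : ℕ)) (C j)
          rw [hC.2.1 j] at hsplit
          have hmem : l ∈ Finset.univ.filter (fun i : Fin n => ¬ r ≤ (i : ℕ)) := by
            simp only [Finset.mem_filter, Finset.mem_univ, true_and]
            exact hlr
          have h2 : C j l ≤ ∑ i ∈ Finset.univ.filter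
              (fun i : Fin n => ¬ r ≤ (i : ℕ)), C j i :=
            Finset.single_le_sum (fun i _ => hC.1 j i) hmem
          have heq : (Sset n r) = Finset.univ.filter (fun i : Fin n => r ≤ (i : ℕ)) := rfl
          rw [heq]
          linarith
  -- every transient node reaches the complement, so w has no transient mass
  have hwzero : ∀ j ∈ Sset n r, w j = 0 := by
    intro j hjS
    have hjval : r ≤ (j : ℕ) := by
      simpa only [Sset, Finset.mem_filter, Finset.mem_univ, true_and] using hjS
    have hjn0 : j ≠ n0 := by
      intro h; rw [h, hn0] at hjval; omega
    obtain ⟨k, _, hk⟩ := (hgr n0).2 (by omega) j hjn0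
    have hmem : n0 ∈ Finset.univ.filter (fun i : Fin n => ¬ r ≤ (i : ℕ)) := by
      simp only [Finset.mem_filter, Finset.mem_univ, true_and, hn0]
      omega
    have hδ : 0 < ∑ i ∈ Finset.univ.filter (fun i : Fin n => ¬ r ≤ (i : ℕ)),
        (C ^ k) j i := by
      have h2 : (C ^ k) j n0 ≤ ∑ i ∈ Finset.univ.filter
          (fun i : Fin n => ¬ r ≤ (i : ℕ)), (C ^ k) j i :=
        Finset.single_le_sum (fun i _ => pow_entry_nonneg hC k j i) hmem
      linarith
    have := hkey k j hjS hδ 0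
    simpa using this
  have hw0 : mS r w = 0 := Finset.sum_eq_zero hwzero
  have := hwit 0
  simp only [Function.iterate_zero, id_eq] at this
  rw [hw0] at this
  linarith

end Mzero

open Filter Topology

section Conv

variable {n : ℕ} {C : Matrix (Fin n) (Fin n) ℝ} {r : ℕ} {n0 : Fin n}
variable {x : ℕ → Fin n → ℝ}

lemma center_tendsto_one (hn : 3 ≤ n) (hC : IsRIM C) (hr : 3 ≤ r) (hrn : r ≤ n)
    (hn0 : (n0 : ℕ) = 0)
    (hgr : ∀ i : Fin n, GloballyReachable C i ↔ (i : ℕ) < r)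
    (hstar1 : ∀ j : Fin n, 1 ≤ (j : ℕ) → (j : ℕ) < r → C j n0 = 1)
    (hstar2 : ∀ j : Fin n, 1 ≤ (j : ℕ) → (j : ℕ) < r → 0 < C n0 j)
    (hx0 : x 0 ∈ simplex n)
    (hnv : ∀ i, x 0 ≠ vertex n i) (hrec : ∀ t, x (t + 1) = DF C (x t)) :
    Tendsto (fun t => x t n0) atTop (𝓝 1) := by
  have hsimp := orbit_simplex hC hx0 hrec
  have hmz := mS_tendsto_zero hn hC hr hrn hn0 hgr hstar1 hx0 hnv hrec
  -- Step A : a uniform positive lower bound for the center, eventually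
  obtain ⟨T0, hT0⟩ := center_eventually_pos hC hr hn0 hgr hx0 hnv hrec
  have hev : ∀ᶠ t in atTop, mS r (x t) < 1/16 :=
    hmz.eventually (gt_mem_nhds (by norm_num : (0:ℝ) < 1/16))
  obtain ⟨T1, hT1⟩ := eventually_atTop.1 hev
  set T := max T0 T1 with hT
  set b := min (x T n0) (1/4) with hb
  have hbpos : 0 < b := by
    apply lt_min
    · exact hT0 T (le_max_left _ _)
    · norm_num
  have hb14 : b ≤ 1/4 := min_le_right _ _
  have hlow : ∀ t, T ≤ t → b ≤ x t n0 := by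
    intro t ht
    induction t, ht using Nat.le_induction with
    | base => exact min_le_left _ _
    | succ t ht ih =>
      have hm0 : 0 ≤ mS r (x t) := mS_nonneg (hsimp t)
      have hm1 : mS r (x t) < 1/16 := hT1 t (le_trans (le_max_right _ _) ht)
      have hd : x t n0 + mS r (x t) * (1 - 2 * x t n0 - mS r (x t)) ≤ x (t + 1) n0 := by
        rw [hrec]
        exact center_drift hC hr hn0 hstar1 (hsimp t)
      have hx1 : x t n0 ≤ 1 := simplex_le_one (hsimp t) n0
      rcases le_or_gt (x t n0) (7/16) with hc | hc
      · have hpr : 0 ≤ mS r (x t) * (1 - 2 * x t n0 - mS r (x t)) :=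
          mul_nonneg hm0 (by linarith)
        linarith
      · have hph : 0 ≤ mS r (x t) * (33/16 - 2 * x t n0 - mS r (x t)) :=
          mul_nonneg hm0 (by linarith)
        nlinarith [hd, hph]
  -- Step B : the increasing sequence of tail-infima of the center
  have hbddb : ∀ t : ℕ, BddBelow (Set.range fun s => x (t + s) n0) := by
    intro t
    exact ⟨0, by rintro v ⟨s, rfl⟩; exact (hsimp (t + s)).1 n0⟩
  set I : ℕ → ℝ := fun t => ⨅ s : ℕ, x (t + s) n0 with hI
  have hxI : ∀ t, I t ≤ x t n0 := by
    intro t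
    have := ciInf_le (hbddb t) 0
    simpa using this
  have hIle : ∀ t s, I t ≤ x (t + s) n0 := fun t s => ciInf_le (hbddb t) s
  have hImono : Monotone I := by
    apply monotone_nat_of_le_succ
    intro t
    apply le_ciInf
    intro s
    have := hIle t (1 + s)
    rwa [show t + (1 + s) = t + 1 + s by omega] at this
  have hIub : ∀ t, I t ≤ 1 := fun t => le_trans (hxI t) (simplex_le_one (hsimp t) n0)
  have hbddA : BddAbove (Set.range I) := ⟨1, by rintro v ⟨t, rfl⟩; exact hIub t⟩
  set a := ⨆ t, I t with ha
  have hIa : Tendsto I atTop (𝓝 a) := tendsto_atTop_ciSup hImono hbddA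
  have haub : a ≤ 1 := ciSup_le hIub
  have hIlea : ∀ t, I t ≤ a := fun t => le_ciSup hbddA t
  have hba : b ≤ a := by
    have h1 : b ≤ I T := le_ciInf fun s => hlow (T + s) (by omega)
    exact le_trans h1 (hIlea T)
  -- Step C : a = 1
  have ha1 : a = 1 := by
    by_contra hne
    have halt : a < 1 := lt_of_le_of_ne haub hne
    have hapos : 0 < a := lt_of_lt_of_le hbpos hba
    -- select times approaching the liminf from above, with tails bounded below
    have hsel : ∀ k : ℕ, ∃ v : ℕ, k ≤ v ∧ x (v + 2) n0 < a + 1/((k:ℝ)+1) ∧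
        ∀ u, v ≤ u → a - 1/((k:ℝ)+1) < x u n0 := by
      intro k
      have hε : (0:ℝ) < 1/((k:ℝ)+1) := by positivity
      have hevI : ∀ᶠ t in atTop, a - 1/((k:ℝ)+1) < I t :=
        hIa.eventually (lt_mem_nhds (by linarith))
      obtain ⟨N0, hN0⟩ := eventually_atTop.1 hevI
      set N := max N0 k with hN
      have hIN : a - 1/((k:ℝ)+1) < I N := hN0 N (le_max_left _ _)
      have hinf : I (N + 2) < a + 1/((k:ℝ)+1) := lt_of_le_of_lt (hIlea _) (by linarith)
      obtain ⟨s, hs⟩ := exists_lt_of_ciInf_lt hinf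
      refine ⟨N + s, le_trans (le_max_right _ _) (Nat.le_add_right _ _), ?_, ?_⟩
      · rwa [show N + s + 2 = N + 2 + s by omega]
      · intro u hu
        calc a - 1/((k:ℝ)+1) < I N := hIN
        _ ≤ I u := hImono (le_trans (Nat.le_add_right _ _) hu)
        _ ≤ x u n0 := hxI u
    choose v hv1 hv2 hv3 using hsel
    -- a convergent subsequence of the selected points
    obtain ⟨w, hwmem, φ, hφmono, hφten⟩ :=
      isCompact_simplex.tendsto_subseq (fun k => hsimp (v k))
    have hφge : ∀ k, k ≤ φ k := fun k => hφmono.le_apply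
    have hvφ : ∀ k : ℕ, k ≤ v (φ k) := fun k => le_trans (hφge k) (hv1 (φ k))
    have hεten : Tendsto (fun k : ℕ => 1/((k:ℝ)+1)) atTop (𝓝 0) :=
      tendsto_one_div_add_atTop_nhds_zero_nat
    have hεφ : ∀ k : ℕ, 1/((φ k : ℝ)+1) ≤ 1/((k:ℝ)+1) := by
      intro k
      apply one_div_le_one_div_of_le (by positivity)
      have h3 : (k:ℝ) ≤ (φ k : ℝ) := Nat.cast_le.2 (hφge k)
      linarith
    -- limits of the three coordinate sequences
    have hDF2 : ∀ t, x (t + 2) = DF C (DF C (x t)) := by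
      intro t
      rw [show t + 2 = t + 1 + 1 by omega, hrec, hrec]
    have hten0 : Tendsto (fun k => x (v (φ k))) atTop (𝓝 w) := hφten
    have hten1 : Tendsto (fun k => x (v (φ k) + 1)) atTop (𝓝 (DF C w)) := by
      have h2 : Tendsto (fun k => DF C (x (v (φ k)))) atTop (𝓝 (DF C w)) :=
        ((continuous_DF C).tendsto w).comp hten0
      refine h2.congr fun k => ?_
      rw [hrec]
    have hten2 : Tendsto (fun k => x (v (φ k) + 2)) atTop (𝓝 (DF C (DF C w))) := by
      have h2 : Tendsto (fun k => DF C (DF C (x (v (φ k))))) atTop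
          (𝓝 (DF C (DF C w))) :=
        (((continuous_DF C).comp (continuous_DF C)).tendsto w).comp hten0
      refine h2.congr fun k => ?_
      rw [hDF2]
    have hcoord : ∀ (z : Fin n → ℝ) (g : ℕ → Fin n → ℝ),
        Tendsto g atTop (𝓝 z) → Tendsto (fun k => g k n0) atTop (𝓝 (z n0)) :=
      fun z g hg => ((continuous_apply n0).tendsto z).comp hg
    have hlo : Tendsto (fun k : ℕ => a - 1/((k:ℝ)+1)) atTop (𝓝 a) := by
      have := tendsto_const_nhds (x := a) (f := atTop (α := ℕ)).sub hεten
      simpa using this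
    have hhi : Tendsto (fun k : ℕ => a + 1/((k:ℝ)+1)) atTop (𝓝 a) := by
      have := tendsto_const_nhds (x := a) (f := atTop (α := ℕ)).add hεten
      simpa using this
    -- w n0 ≥ a
    have hw0ge : a ≤ w n0 := by
      apply le_of_tendsto_of_tendsto' hlo (hcoord w _ hten0)
      intro k
      have := hv3 (φ k) (v (φ k)) (le_refl _)
      have h2 := hεφ k
      linarith
    have hw1ge : a ≤ DF C w n0 := by
      apply le_of_tendsto_of_tendsto' hlo (hcoord _ _ hten1)
      intro k
      have := hv3 (φ k) (v (φ k) + 1) (Nat.le_add_right _ _)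
      have h2 := hεφ k
      linarith
    have hw2le : DF C (DF C w) n0 ≤ a := by
      apply le_of_tendsto_of_tendsto' (hcoord _ _ hten2) hhi
      intro k
      have := hv2 (φ k)
      have h2 := hεφ k
      linarith
    -- w has no transient mass
    have hmw : mS r w = 0 := by
      have h1 : Tendsto (fun k => mS r (x (v (φ k)))) atTop (𝓝 0) := by
        apply hmz.comp
        exact tendsto_atTop_mono hvφ tendsto_id
      have h2 : Tendsto (fun k => mS r (x (v (φ k)))) atTop (𝓝 (mS r w)) :=
        (continuous_mS.tendsto w).comp hten0
      exact tendsto_nhds_unique h2 h1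
    have hfw : ∀ j ∈ Sset n r, w j = 0 := by
      intro j hj
      have hnn : ∀ j ∈ Sset n r, 0 ≤ w j := fun j _ => hwmem.1 j
      exact (Finset.sum_eq_zero_iff_of_nonneg hnn).1 hmw j hj
    -- the face is invariant and the center is monotone there
    have hDFw : DF C w ∈ simplex n := DF_mem_simplex C hC hwmem
    have hfDFw : ∀ j ∈ Sset n r, DF C w j = 0 :=
      face_invariant hC hr hn0 hgr hstar1 hwmem hfw
    have hmDFw : mS r (DF C w) = 0 := Finset.sum_eq_zero hfDFw
    have hmono1 : w n0 ≤ DF C w n0 := by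
      have := center_drift hC hr hn0 hstar1 hwmem
      rw [hmw] at this
      linarith
    have hmono2 : DF C w n0 ≤ DF C (DF C w) n0 := by
      have := center_drift hC hr hn0 hstar1 hDFw
      rw [hmDFw] at this
      linarith
    have hw0 : w n0 = a := le_antisymm (by linarith) hw0ge
    have hw1 : DF C w n0 = a := le_antisymm (by linarith) hw1ge
    -- all leaves of DF w are strictly positive
    have hyw : 0 < yv w n0 := yv_pos (by rw [hw0]; exact hapos) (by rw [hw0]; exact halt)
    have hleafpos : ∀ j ∈ Lset n r, 0 < DF C w j := by
      intro j hj
      simp only [Lset, Finset.mem_filter, Finset.mem_univ, true_and] at hj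
      have h1 : C n0 j * yv w n0 ≤ DF C w j := DF_ge_term C hC hwmem j n0
      have h2 : 0 < C n0 j := hstar2 j hj.1 hj.2
      nlinarith
    -- two positive leaves at DF w give a strict increase, contradiction
    have h1n : 1 < n := by omega
    have h2n : 2 < n := by omega
    have haL : (⟨1, h1n⟩ : Fin n) ∈ Lset n r := by simp [Lset]; omega
    have hbL : (⟨2, h2n⟩ : Fin n) ∈ Lset n r := by simp [Lset]; omega
    have hab : (⟨1, h1n⟩ : Fin n) ≠ ⟨2, h2n⟩ := by
      intro h
      have := congrArg (Fin.val) h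
      simp at this
    have hstrict : DF C w n0 < DF C (DF C w) n0 :=
      face_center_strict hC hr hn0 hstar1 hDFw hfDFw haL hbL hab
        (hleafpos _ haL) (hleafpos _ hbL)
    rw [hw1] at hstrict
    linarith
  -- Step D : squeeze
  rw [← ha1]
  have hle1 : ∀ t, x t n0 ≤ a := fun t => by
    rw [ha1]; exact simplex_le_one (hsimp t) n0
  exact tendsto_of_tendsto_of_tendsto_of_le_of_le hIa tendsto_const_nhds hxI hle1

end Conv

theorem stmt11 {n : ℕ} (hn : 3 ≤ n) (C : Matrix (Fin n) (Fin n) ℝ) (hC : IsRIM C)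
    (hred : ¬ Irred C) (r : ℕ) (hr : 3 ≤ r) (hrn : r ≤ n)
    (hgr : ∀ i : Fin n, GloballyReachable C i ↔ (i : ℕ) < r)
    (hstar1 : ∀ j : Fin n, 1 ≤ (j : ℕ) → (j : ℕ) < r → C j ⟨0, by omega⟩ = 1)
    (hstar2 : ∀ j : Fin n, 1 ≤ (j : ℕ) → (j : ℕ) < r → 0 < C ⟨0, by omega⟩ j) :
    (∀ x ∈ simplex n, (DF C x = x ↔ ∃ i, x = vertex n i)) ∧
    (∀ x : ℕ → Fin n → ℝ, x 0 ∈ simplex n → (∀ i, x 0 ≠ vertex n i) →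
      (∀ t, x (t + 1) = DF C (x t)) →
      Filter.Tendsto x Filter.atTop (nhds (vertex n ⟨0, by omega⟩))) := by
  have hn' : 0 < n := by omega
  have hn0 : ((⟨0, hn'⟩ : Fin n) : ℕ) = 0 := rfl
  have hstar1' : ∀ j : Fin n, 1 ≤ (j : ℕ) → (j : ℕ) < r → C j ⟨0, hn'⟩ = 1 := hstar1
  have hstar2' : ∀ j : Fin n, 1 ≤ (j : ℕ) → (j : ℕ) < r → 0 < C ⟨0, hn'⟩ j := hstar2
  constructor
  · intro x hx
    constructor
    · intro hfix
      exact fixed_is_vertex hn hC hr hrn hn0 hgr hstar1' hstar2' hx hfix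
    · rintro ⟨i, rfl⟩
      exact DF_vertex C i
  · intro x hx0 hnv hrec
    have hc := center_tendsto_one hn hC hr hrn hn0 hgr hstar1' hstar2' hx0 hnv hrec
    have hsimp := orbit_simplex hC hx0 hrec
    rw [tendsto_pi_nhds]
    intro i
    by_cases hi : i = (⟨0, hn'⟩ : Fin n)
    · subst hi
      have : vertex n (⟨0, by omega⟩ : Fin n) (⟨0, hn'⟩ : Fin n) = 1 := by
        simp [vertex]
      rw [this]
      exact hc
    · have hv0 : vertex n (⟨0, by omega⟩ : Fin n) i = 0 := by
        simp only [vertex, if_neg hi]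
      rw [hv0]
      have hub : ∀ t, x t i ≤ 1 - x t (⟨0, hn'⟩ : Fin n) := by
        intro t
        have := pair_le_one (hsimp t) (Ne.symm hi)
        linarith
      have h1 : Tendsto (fun t => 1 - x t (⟨0, hn'⟩ : Fin n)) atTop (𝓝 0) := by
        have := (tendsto_const_nhds (x := (1:ℝ)) (f := atTop (α := ℕ))).sub hc
        simpa using this
      have h0 : Tendsto (fun _ : ℕ => (0:ℝ)) atTop (𝓝 0) := tendsto_const_nhds
      exact tendsto_of_tendsto_of_tendsto_of_le_of_le h0 h1
        (fun t => (hsimp t).1 i) hub
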